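/- Let T > 0, ε > 0. Let u : [0,T] × ℝ³ → ℝ³ be continuous, C¹ in the space variable, and ℤ³-periodic in x, and let ρ : [0,T] × ℝ³ → ℝ be continuous, C¹ in t on (0,T], C² in x, ℤ³-periodic in x, and satisfy pointwise on (0,T] × ℝ³ the regularized continuity equation ∂_t ρ + Σ_{i=1}^3 ∂_{x_i}(ρ u_i) = ε Σ_{i=1}^3 ∂²_{x_i} ρ. Let ρ₀ = ρ(0,·) and assume m₀ := inf_x ρ₀(x) > 0, M₀ := sup_x ρ₀(x) < ∞, and that g(t) := sup_x |div u(t,x)| is integrable on [0,T]. Then for all (t,x) ∈ [0,T] × ℝ³: m₀ · exp(−∫₀ᵗ g(s) ds) ≤ ρ(t,x) ≤ M₀ · exp(∫₀ᵗ g(s) ds). -/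

import Mathlib

open MeasureTheory

/-- Partial derivative in direction `i` of a function on `ℝ³` (realized as `Fin 3 → ℝ`). -/
noncomputable def pd (i : Fin 3) (f : (Fin 3 → ℝ) → ℝ) (x : Fin 3 → ℝ) : ℝ :=
  fderiv ℝ f x (Pi.single i 1)

lemma cube_reduce (x : Fin 3 → ℝ) :
    ∃ y ∈ Set.Icc (0 : Fin 3 → ℝ) 1, ∃ k : Fin 3 → ℤ,
      x = y + fun i => (k i : ℝ) := by
  refine ⟨fun i => Int.fract (x i), ?_, fun i => ⌊x i⌋, ?_⟩
  · constructor
    · intro i; exact (Int.fract_nonneg _)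
    · intro i; exact (Int.fract_lt_one _).le
  · funext i
    show x i = Int.fract (x i) + (⌊x i⌋ : ℝ)
    rw [Int.fract]; ring

lemma pd_second_nonneg_at_min (f : (Fin 3 → ℝ) → ℝ) (hf : ContDiff ℝ 2 f)
    (z : Fin 3 → ℝ) (hmin : ∀ y, f z ≤ f y) (i : Fin 3) :
    0 ≤ pd i (fun y => pd i f y) z := by
  classical
  set e : Fin 3 → ℝ := Pi.single i 1 with he
  set L : ℝ → (Fin 3 → ℝ) := fun s => z + s • e with hL
  have hL0 : L 0 = z := by simp [hL]
  have hLd : ∀ s : ℝ, HasDerivAt L e s := by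
    intro s
    have h1 : HasDerivAt (fun s : ℝ => s • e) ((1 : ℝ) • e) s :=
      (hasDerivAt_id s).smul_const e
    simpa [hL, one_smul] using h1.const_add z
  have hfd : Differentiable ℝ f := hf.differentiable (by norm_num)
  have hpdC : ContDiff ℝ 1 (fun y => fderiv ℝ f y e) := by
    have h2 : ContDiff ℝ 1 (fderiv ℝ f) := hf.fderiv_right (m := 1) (by norm_num)
    exact h2.clm_apply contDiff_const
  set φ : ℝ → ℝ := fun s => f (L s) with hφ
  set ψ : ℝ → ℝ := fun s => fderiv ℝ f (L s) e with hψ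
  have hφd : ∀ s : ℝ, HasDerivAt φ (ψ s) s := fun s =>
    ((hfd (L s)).hasFDerivAt).comp_hasDerivAt s (hLd s)
  have hψd : HasDerivAt ψ (pd i (fun y => pd i f y) z) 0 := by
    have h3 : DifferentiableAt ℝ (fun y => fderiv ℝ f y e) z :=
      (hpdC.differentiable (by norm_num)) z
    have h3' : HasFDerivAt (fun y => fderiv ℝ f y e)
        (fderiv ℝ (fun y => fderiv ℝ f y e) z) (L 0) := hL0 ▸ h3.hasFDerivAt
    have h4 := h3'.comp_hasDerivAt 0 (hLd 0)
    exact h4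
  have hψ0 : ψ 0 = 0 := by
    have hloc : IsLocalMin f z := Filter.Eventually.of_forall hmin
    simp [hψ, hL0, hloc.fderiv_eq_zero]
  -- the derivative of ψ at 0 is the limit of slopes
  by_contra hneg
  push_neg at hneg
  have htend : Filter.Tendsto (slope ψ 0) (nhdsWithin 0 (Set.Ioi 0))
      (nhds (pd i (fun y => pd i f y) z)) := by
    have := hasDerivAt_iff_tendsto_slope.mp hψd
    exact this.mono_left (nhdsWithin_mono _ (by intro x hx; exact ne_of_gt hx))
  have hev : ∀ᶠ s in nhdsWithin 0 (Set.Ioi 0), slope ψ 0 s < 0 :=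
    htend.eventually (eventually_lt_nhds hneg)
  rcases (mem_nhdsGT_iff_exists_Ioc_subset).mp hev with ⟨u, hu, hsub⟩
  have hu0 : (0:ℝ) < u := hu
  -- MVT on [0,u]
  obtain ⟨ξ, hξ, hval⟩ := exists_hasDerivAt_eq_slope φ ψ hu0
    ((hfd.comp ((differentiable_id.smul_const e).const_add z)).continuous.continuousOn)
    (fun x _ => hφd x)
  have hξ0 : 0 < ξ := hξ.1
  have hψξ : 0 ≤ ψ ξ := by
    rw [hval]
    have h5 : φ 0 ≤ φ u := by simpa [hφ, hL0] using hmin (L u)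
    have h6 : (0:ℝ) ≤ φ u - φ 0 := by linarith
    rw [sub_zero]
    exact div_nonneg h6 hu0.le
  have : slope ψ 0 ξ < 0 := hsub ⟨hξ0, hξ.2.le⟩
  rw [slope_def_field, hψ0, sub_zero, sub_zero] at this
  have hlt : ψ ξ < 0 := by
    rcases div_neg_iff.mp this with h | h
    · linarith [h.2, hξ0]
    · exact h.1
  linarith

lemma pd_neg (f : (Fin 3 → ℝ) → ℝ) (i : Fin 3) (x : Fin 3 → ℝ) :
    pd i (fun y => -f y) x = -(pd i f x) := by
  have : (fun y => -f y) = fun y => -(f y) := rfl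
  simp [pd, fderiv_neg]

lemma pd_second_neg (f : (Fin 3 → ℝ) → ℝ) (i : Fin 3) (x : Fin 3 → ℝ) :
    pd i (fun y => pd i (fun w => -f w) y) x = -(pd i (fun y => pd i f y) x) := by
  have h1 : (fun y => pd i (fun w => -f w) y) = fun y => -(pd i f y) := by
    funext y; exact pd_neg f i y
  rw [h1]
  simp [pd, fderiv_neg]


lemma pd_second_nonpos_at_max (f : (Fin 3 → ℝ) → ℝ) (hf : ContDiff ℝ 2 f)
    (z : Fin 3 → ℝ) (hmax : ∀ y, f y ≤ f z) (i : Fin 3) :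
    pd i (fun y => pd i f y) z ≤ 0 := by
  have h := pd_second_nonneg_at_min (fun y => -f y) hf.neg z
    (fun y => neg_le_neg (hmax y)) i
  rw [pd_second_neg] at h
  linarith

lemma pd_mul_at_crit (f : (Fin 3 → ℝ) → ℝ) (w : (Fin 3 → ℝ) → ℝ)
    (z : Fin 3 → ℝ) (hfd : DifferentiableAt ℝ f z) (hwd : DifferentiableAt ℝ w z)
    (hcrit : fderiv ℝ f z = 0) (i : Fin 3) :
    pd i (fun y => f y * w y) z = f z * pd i w z := by
  simp [pd, fderiv_fun_mul hfd hwd, hcrit]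

lemma rhs_ge_at_min (ε G : ℝ) (hε : 0 < ε) (f : (Fin 3 → ℝ) → ℝ)
    (v : (Fin 3 → ℝ) → Fin 3 → ℝ)
    (hf : ContDiff ℝ 2 f) (hv : ContDiff ℝ 1 v) (z : Fin 3 → ℝ)
    (hmin : ∀ y, f z ≤ f y) (hfz : 0 < f z)
    (hG : |∑ i, pd i (fun y => v y i) z| ≤ G) :
    -(f z * G) ≤ ε * (∑ i, pd i (fun y => pd i f y) z)
      - ∑ i, pd i (fun y => f y * v y i) z := by
  have hfd : Differentiable ℝ f := hf.differentiable (by norm_num)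
  have hloc : IsLocalMin f z := Filter.Eventually.of_forall hmin
  have hcrit : fderiv ℝ f z = 0 := hloc.fderiv_eq_zero
  have hvd : ∀ i : Fin 3, DifferentiableAt ℝ (fun y => v y i) z := by
    intro i
    exact ((ContinuousLinearMap.proj (R := ℝ) (φ := fun _ : Fin 3 => ℝ) i).differentiable.comp
      (hv.differentiable (by norm_num))) z
  have hmul : (∑ i, pd i (fun y => f y * v y i) z)
      = f z * ∑ i, pd i (fun y => v y i) z := by
    rw [Finset.mul_sum]
    refine Finset.sum_congr rfl (fun i _ => ?_)
    exact pd_mul_at_crit f _ z (hfd z) (hvd i) hcrit i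
  have h2 : 0 ≤ ∑ i, pd i (fun y => pd i f y) z :=
    Finset.sum_nonneg (fun i _ => pd_second_nonneg_at_min f hf z hmin i)
  have hdiv : ∑ i, pd i (fun y => v y i) z ≤ G := (abs_le.mp hG).2
  have := mul_le_mul_of_nonneg_left hdiv hfz.le
  nlinarith [mul_nonneg hε.le h2]

lemma rhs_le_at_max (ε G : ℝ) (hε : 0 < ε) (f : (Fin 3 → ℝ) → ℝ)
    (v : (Fin 3 → ℝ) → Fin 3 → ℝ)
    (hf : ContDiff ℝ 2 f) (hv : ContDiff ℝ 1 v) (z : Fin 3 → ℝ)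
    (hmax : ∀ y, f y ≤ f z) (hfz : 0 < f z)
    (hG : |∑ i, pd i (fun y => v y i) z| ≤ G) :
    ε * (∑ i, pd i (fun y => pd i f y) z)
      - ∑ i, pd i (fun y => f y * v y i) z ≤ f z * G := by
  have hfd : Differentiable ℝ f := hf.differentiable (by norm_num)
  have hloc : IsLocalMax f z := Filter.Eventually.of_forall hmax
  have hcrit : fderiv ℝ f z = 0 := hloc.fderiv_eq_zero
  have hvd : ∀ i : Fin 3, DifferentiableAt ℝ (fun y => v y i) z := by
    intro i
    exact ((ContinuousLinearMap.proj (R := ℝ) (φ := fun _ : Fin 3 => ℝ) i).differentiable.comp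
      (hv.differentiable (by norm_num))) z
  have hmul : (∑ i, pd i (fun y => f y * v y i) z)
      = f z * ∑ i, pd i (fun y => v y i) z := by
    rw [Finset.mul_sum]
    refine Finset.sum_congr rfl (fun i _ => ?_)
    exact pd_mul_at_crit f _ z (hfd z) (hvd i) hcrit i
  have h2 : ∑ i, pd i (fun y => pd i f y) z ≤ 0 :=
    Finset.sum_nonpos (fun i _ => pd_second_nonpos_at_max f hf z hmax i)
  have hdiv : -G ≤ ∑ i, pd i (fun y => v y i) z := (abs_le.mp hG).1
  have := mul_le_mul_of_nonneg_left hdiv hfz.le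
  nlinarith [mul_nonneg hε.le (neg_nonneg.mpr h2)]

lemma exists_majorant (g : ℝ → ℝ) (σ T : ℝ) (hσ : 0 < σ) (hσT : σ ≤ T)
    (hgint : IntervalIntegrable g volume 0 T)
    (hg0 : ∀ t ∈ Set.Icc σ T, 0 ≤ g t)
    {η : ℝ} (hη : 0 < η) :
    ∃ h' : ℝ → ℝ, Integrable h' volume ∧
      (∀ t ∈ Set.Ioc σ T, ∃ c' : ℝ, g t < c' ∧ ∀ᶠ s in nhdsWithin t (Set.Iio t),
          c' * (t - s) ≤ ∫ τ in s..t, h' τ) ∧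
      (∀ t ∈ Set.Icc σ T, (∫ τ in σ..t, h' τ) ≤ (∫ τ in σ..t, g τ) + η) := by
  classical
  set f : ℝ → ℝ := (Set.Icc σ T).indicator g with hf
  have hgIcc : IntegrableOn g (Set.Icc σ T) volume := by
    have h1 : IntegrableOn g (Set.Ioc 0 T) volume := hgint.1
    exact h1.mono_set (fun x hx => ⟨lt_of_lt_of_le hσ hx.1, hx.2⟩)
  have hfint : Integrable f volume := by
    rw [hf, integrable_indicator_iff measurableSet_Icc]; exact hgIcc
  have hf0 : ∀ x, 0 ≤ f x := by
    intro x
    rw [hf]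
    by_cases hx : x ∈ Set.Icc σ T
    · rw [Set.indicator_of_mem hx]; exact hg0 x hx
    · rw [Set.indicator_of_notMem hx]
  obtain ⟨h, hlt, hlsc, hint, htop, hIlt⟩ :=
    exists_lt_lowerSemicontinuous_integral_lt (μ := volume) f hfint hη
  set h' : ℝ → ℝ := fun x => (h x).toReal with hh'
  have hae : ∀ᵐ x, f x ≤ h' x := by
    filter_upwards [htop] with x hx
    have hbot : h x ≠ ⊥ := by
      intro hb
      have := hlt x
      rw [hb] at this
      exact absurd this (by simp)
    have : ((f x : ℝ) : EReal) < ((h x).toReal : EReal) := by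
      rw [EReal.coe_toReal hx.ne hbot]
      exact hlt x
    exact_mod_cast this.le
  refine ⟨h', hint, ?_, ?_⟩
  · intro t ht
    have htmem : t ∈ Set.Icc σ T := ⟨ht.1.le, ht.2⟩
    have hft : f t = g t := Set.indicator_of_mem htmem g
    have hlt' : ((g t : ℝ) : EReal) < h t := hft ▸ hlt t
    obtain ⟨c, hc1, hc2⟩ := exists_between hlt'
    have hcT : c ≠ ⊤ := by
      intro hc; rw [hc] at hc2; exact absurd hc2 (by simp)
    have hcB : c ≠ ⊥ := by
      intro hc; rw [hc] at hc1; exact absurd hc1 (by simp)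
    set c' : ℝ := c.toReal with hc'
    have hcc : (c' : EReal) = c := EReal.coe_toReal hcT hcB
    refine ⟨c', by exact_mod_cast hcc ▸ hc1, ?_⟩
    have hev : ∀ᶠ τ in nhds t, (c : EReal) < h τ := hlsc t c hc2
    obtain ⟨r, hr, hball⟩ := Metric.eventually_nhds_iff.mp hev
    filter_upwards [Ioo_mem_nhdsLT_of_mem ⟨sub_lt_self t hr, le_refl t⟩] with s hs
    have hst : s < t := hs.2
    have hmono : (∫ τ in s..t, (fun _ => c') τ) ≤ ∫ τ in s..t, h' τ := by
      apply intervalIntegral.integral_mono_ae_restrict hst.le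
        (intervalIntegrable_const) hint.intervalIntegrable
      have h1 := ae_restrict_of_ae (μ := volume) (s := Set.Icc s t) htop
      have h2 := ae_restrict_mem (μ := volume) (measurableSet_Icc (a := s) (b := t))
      filter_upwards [h1, h2] with τ hτ1 hτ2
      have hτr : dist τ t < r := by
        rw [Real.dist_eq, abs_lt]
        constructor
        · have := hτ2.1; have := hs.1; linarith
        · have := hτ2.2; linarith
      have hcτ : (c : EReal) < h τ := hball hτr
      have hbot : h τ ≠ ⊥ := fun hb => by rw [hb] at hcτ; exact absurd hcτ (by simp)
      have : (c' : EReal) < ((h τ).toReal : EReal) := by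
        rw [hcc, EReal.coe_toReal hτ1.ne hbot]; exact hcτ
      exact_mod_cast this.le
    rw [intervalIntegral.integral_const, smul_eq_mul] at hmono
    calc c' * (t - s) = (t - s) * c' := by ring
    _ ≤ _ := hmono
  · intro t ht
    have h1 : (∫ τ in σ..t, h' τ) + (∫ τ in t..T, h' τ) = ∫ τ in σ..T, h' τ :=
      intervalIntegral.integral_add_adjacent_intervals
        (hint.intervalIntegrable) (hint.intervalIntegrable)
    have h2 : (∫ τ in t..T, f τ) ≤ ∫ τ in t..T, h' τ :=
      intervalIntegral.integral_mono_ae ht.2 hfint.intervalIntegrable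
        hint.intervalIntegrable hae
    have h3 : (∫ τ in σ..T, h' τ) ≤ ∫ x, h' x := by
      rw [intervalIntegral.integral_of_le hσT]
      apply setIntegral_le_integral hint
      filter_upwards [hae] with x hx
      exact le_trans (hf0 x) hx
    have h4 : (∫ x, f x) = ∫ τ in σ..T, g τ := by
      rw [hf, integral_indicator measurableSet_Icc,
        integral_Icc_eq_integral_Ioc, intervalIntegral.integral_of_le hσT]
    have h5 : (∫ τ in t..T, f τ) = ∫ τ in t..T, g τ := by
      rw [intervalIntegral.integral_of_le ht.2, intervalIntegral.integral_of_le ht.2]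
      apply setIntegral_congr_fun measurableSet_Ioc
      intro x hx
      have hx' : x ∈ Set.Icc σ T := ⟨le_trans ht.1 hx.1.le, hx.2⟩
      exact Set.indicator_of_mem hx' g
    have hgsub : ∀ a b : ℝ, σ ≤ a → a ≤ b → b ≤ T → IntervalIntegrable g volume a b := by
      intro a b ha hab hbT
      apply hgint.mono_set
      rw [Set.uIcc_of_le hab, Set.uIcc_of_le (le_trans hσ.le (le_trans ha (le_trans hab hbT)))]
      exact Set.Icc_subset_Icc (le_trans hσ.le ha) hbT
    have h6 : (∫ τ in σ..t, g τ) + (∫ τ in t..T, g τ) = ∫ τ in σ..T, g τ :=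
      intervalIntegral.integral_add_adjacent_intervals
        (hgsub σ t le_rfl ht.1 (le_trans ht.2 le_rfl)) (hgsub t T ht.1 ht.2 le_rfl)
    have hIlt' : (∫ x, h' x) < (∫ x, f x) + η := hIlt
    linarith

lemma barrier_min
    (T ε σ δ m' : ℝ) (hT : 0 < T) (hε : 0 < ε) (hσ : 0 < σ) (hσT : σ ≤ T)
    (hδ : 0 < δ) (hm' : 0 < m')
    (u : ℝ → (Fin 3 → ℝ) → Fin 3 → ℝ) (ρ : ℝ → (Fin 3 → ℝ) → ℝ) (g : ℝ → ℝ)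
    (hu_x : ∀ t ∈ Set.Icc (0 : ℝ) T, ContDiff ℝ 1 (u t))
    (hρ_cont : ContinuousOn (fun p : ℝ × (Fin 3 → ℝ) => ρ p.1 p.2)
      (Set.Icc 0 T ×ˢ Set.univ))
    (hρ_x : ∀ t ∈ Set.Icc (0 : ℝ) T, ContDiff ℝ 2 (ρ t))
    (hρ_per : ∀ t ∈ Set.Icc (0 : ℝ) T, ∀ (x : Fin 3 → ℝ) (k : Fin 3 → ℤ),
      ρ t (x + fun i => (k i : ℝ)) = ρ t x)
    (hpde : ∀ t ∈ Set.Ioc (0 : ℝ) T, ∀ x : Fin 3 → ℝ,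
      HasDerivAt (fun s => ρ s x)
        (ε * (∑ i, pd i (fun y => pd i (ρ t) y) x)
          - ∑ i, pd i (fun y => ρ t y * u t y i) x) t)
    (hg : ∀ t ∈ Set.Icc (0 : ℝ) T,
      IsLUB (Set.range fun x : Fin 3 → ℝ => |∑ i, pd i (fun y => u t y i) x|) (g t))
    (h' : ℝ → ℝ) (hh'int : Integrable h' volume)
    (hP3 : ∀ t ∈ Set.Ioc σ T, ∃ c' : ℝ, g t < c' ∧ ∀ᶠ s in nhdsWithin t (Set.Iio t),
        c' * (t - s) ≤ ∫ τ in s..t, h' τ)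
    (hinit : ∀ x ∈ Set.Icc (0 : Fin 3 → ℝ) 1, m' < ρ σ x) :
    ∀ t ∈ Set.Icc σ T, ∀ x : Fin 3 → ℝ,
      m' * Real.exp (-((∫ τ in σ..t, h' τ) + δ * (t - σ))) ≤ ρ t x := by
  classical
  set H : ℝ → ℝ := fun s => ∫ τ in σ..s, h' τ with hH
  have hHcont : Continuous H := hh'int.continuous_primitive σ
  set E : ℝ → ℝ := fun s => H s + δ * (s - σ) with hE
  have hEcont : Continuous E := by fun_prop
  have hEσ : E σ = 0 := by
    simp [hE, hH, intervalIntegral.integral_same]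
  set w : ℝ × (Fin 3 → ℝ) → ℝ := fun p => ρ p.1 p.2 * Real.exp (E p.1) with hw
  set Q : Set (Fin 3 → ℝ) := Set.Icc 0 1 with hQ
  set K : Set (ℝ × (Fin 3 → ℝ)) := Set.Icc σ T ×ˢ Q with hK
  have hKsub : K ⊆ Set.Icc 0 T ×ˢ Set.univ := by
    rintro ⟨t, x⟩ ⟨ht, -⟩
    exact ⟨⟨le_trans hσ.le ht.1, ht.2⟩, trivial⟩
  have hKcomp : IsCompact K := isCompact_Icc.prod isCompact_Icc
  have hKclosed : IsClosed K := isClosed_Icc.prod isClosed_Icc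
  have hwcont : ContinuousOn w K :=
    (hρ_cont.mono hKsub).mul ((hEcont.comp continuous_fst).rexp).continuousOn
  -- continuity in time of w at a fixed spatial point
  have hρtcont : ∀ y : Fin 3 → ℝ, ContinuousOn (fun s => ρ s y) (Set.Icc 0 T) := by
    intro y
    have : ContinuousOn (fun s : ℝ => ((s, y) : ℝ × (Fin 3 → ℝ))) (Set.Icc 0 T) :=
      (continuous_id.prodMk continuous_const).continuousOn
    exact hρ_cont.comp this (fun s hs => ⟨hs, trivial⟩)
  have hwtcont : ∀ y : Fin 3 → ℝ,
      ContinuousOn (fun s => ρ s y * Real.exp (E s)) (Set.Icc 0 T) :=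
    fun y => (hρtcont y).mul (hEcont.rexp).continuousOn
  -- main claim
  have key : ∀ p ∈ K, m' < w p := by
    by_contra hcon
    push_neg at hcon
    obtain ⟨p0, hp0K, hp0⟩ := hcon
    set C : Set (ℝ × (Fin 3 → ℝ)) := K ∩ w ⁻¹' Set.Iic m' with hC
    have hCne : C.Nonempty := ⟨p0, hp0K, hp0⟩
    have hCclosed : IsClosed C :=
      hwcont.preimage_isClosed_of_isClosed hKclosed (isClosed_Iic (a := m'))
    have hCcomp : IsCompact C := hKcomp.of_isClosed_subset hCclosed Set.inter_subset_left
    obtain ⟨phat, hphatC, hmin⟩ := hCcomp.exists_isMinOn hCne continuous_fst.continuousOn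
    obtain ⟨that, xhat⟩ := phat
    have hthatK : that ∈ Set.Icc σ T := hphatC.1.1
    have hxhatQ : xhat ∈ Q := hphatC.1.2
    have hwhat : w (that, xhat) ≤ m' := hphatC.2
    have hσthat : σ < that := by
      rcases lt_or_eq_of_le hthatK.1 with h | h
      · exact h
      · exfalso
        have : w (that, xhat) = ρ σ xhat := by
          rw [hw]; simp only; rw [← h, hEσ, Real.exp_zero, mul_one]
        rw [this] at hwhat
        exact absurd hwhat (not_le.mpr (hinit xhat hxhatQ))
    have hthatT : that ≤ T := hthatK.2
    have hthat0T : that ∈ Set.Icc (0:ℝ) T := ⟨le_trans hσ.le hthatK.1, hthatT⟩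
    -- F2
    have hF2 : ∀ s ∈ Set.Ico σ that, ∀ y ∈ Q, m' < w (s, y) := by
      intro s hs y hy
      by_contra hle
      push_neg at hle
      have : (s, y) ∈ C := ⟨⟨⟨hs.1, le_trans hs.2.le hthatT⟩, hy⟩, hle⟩
      exact absurd (hmin this) (not_le.mpr hs.2)
    -- neBot filter from the left within Ioo σ that
    have hsub1 : Set.Ioo σ that ⊆ Set.Icc (0:ℝ) T := fun s hs =>
      ⟨le_trans hσ.le hs.1.le, le_trans hs.2.le hthatT⟩
    have hneBot : (nhdsWithin that (Set.Ioo σ that)).NeBot := by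
      rw [← mem_closure_iff_nhdsWithin_neBot, closure_Ioo hσthat.ne]
      exact ⟨hσthat.le, le_refl that⟩
    -- F3 : w (that,xhat) = m'
    have hF3 : w (that, xhat) = m' := by
      refine le_antisymm hwhat ?_
      have hlim : Filter.Tendsto (fun s => ρ s xhat * Real.exp (E s))
          (nhdsWithin that (Set.Ioo σ that)) (nhds (ρ that xhat * Real.exp (E that))) :=
        ((hwtcont xhat that hthat0T).mono hsub1).tendsto
      have h9 : m' ≤ ρ that xhat * Real.exp (E that) := by
        refine ge_of_tendsto hlim ?_
        filter_upwards [self_mem_nhdsWithin] with s hs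
        exact (hF2 s ⟨hs.1.le, hs.2⟩ xhat hxhatQ).le
      exact h9
    have hρpos : 0 < ρ that xhat := by
      have h1 : ρ that xhat * Real.exp (E that) = m' := hF3
      nlinarith [Real.exp_pos (E that), hm']
    -- F4 : xhat is a global spatial minimum of ρ that
    have hF4 : ∀ y, ρ that xhat ≤ ρ that y := by
      have hQmin : ∀ y ∈ Q, ρ that xhat ≤ ρ that y := by
        intro y hy
        by_contra hlt
        push_neg at hlt
        have hwy : ρ that y * Real.exp (E that) < m' := by
          have := mul_lt_mul_of_pos_right hlt (Real.exp_pos (E that))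
          calc ρ that y * Real.exp (E that) < ρ that xhat * Real.exp (E that) := this
          _ = m' := hF3
        have hlim : Filter.Tendsto (fun s => ρ s y * Real.exp (E s))
            (nhdsWithin that (Set.Ioo σ that)) (nhds (ρ that y * Real.exp (E that))) :=
          ((hwtcont y that hthat0T).mono hsub1).tendsto
        have hev := hlim.eventually_lt_const hwy
        obtain ⟨s, hs1, hs2⟩ := (hev.and self_mem_nhdsWithin).exists
        exact absurd hs1 (not_lt.mpr (hF2 s ⟨hs2.1.le, hs2.2⟩ y hy).le)
      intro y
      obtain ⟨z, hz, k, hzk⟩ := cube_reduce y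
      have : ρ that y = ρ that z := by rw [hzk]; exact hρ_per that hthat0T z k
      rw [this]
      exact hQmin z hz
    -- PDE at (that, xhat)
    have hmemIoc : that ∈ Set.Ioc (0:ℝ) T := ⟨lt_of_le_of_lt hσ.le hσthat, hthatT⟩
    have hD := hpde that hmemIoc xhat
    set D : ℝ := ε * (∑ i, pd i (fun y => pd i (ρ that) y) xhat)
      - ∑ i, pd i (fun y => ρ that y * u that y i) xhat with hDdef
    have hdivb : |∑ i, pd i (fun y => u that y i) xhat| ≤ g that :=
      (hg that hthat0T).1 (Set.mem_range_self xhat)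
    have hlow : -(ρ that xhat * g that) ≤ D :=
      rhs_ge_at_min ε (g that) hε (ρ that) (u that) (hρ_x that hthat0T)
        (hu_x that hthat0T) xhat hF4 hρpos hdivb
    -- slope bound from the left
    obtain ⟨c', hc'gt, hc'ev⟩ := hP3 that ⟨hσthat, hthatT⟩
    have hg0 : 0 ≤ g that := le_trans (abs_nonneg _) hdivb
    have hslope : Filter.Tendsto (slope (fun s => ρ s xhat) that)
        (nhdsWithin that (Set.Iio that)) (nhds D) := by
      have h1 := (hD.hasDerivWithinAt (s := Set.Iio that))
      have h2 := (hasDerivWithinAt_iff_tendsto_slope' (x := that) (s := Set.Iio that)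
        (by simp)).mp h1
      exact h2
    have hint_split : ∀ s, (∫ τ in s..that, h' τ) = H that - H s := by
      intro s
      have := intervalIntegral.integral_add_adjacent_intervals
        (hh'int.intervalIntegrable (a := σ) (b := s))
        (hh'int.intervalIntegrable (a := s) (b := that))
      have h9 : H s + (∫ τ in s..that, h' τ) = H that := this
      linarith
    have hub : D ≤ -(ρ that xhat * (c' + δ)) := by
      refine le_of_tendsto hslope ?_
      have hIoo : Set.Ioo σ that ∈ nhdsWithin that (Set.Iio that) :=
        Ioo_mem_nhdsLT_of_mem ⟨hσthat, le_refl that⟩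
      filter_upwards [hc'ev, hIoo] with s hsA hsIoo
      have hst : s < that := hsIoo.2
      have hA : (c' + δ) * (that - s) ≤ E that - E s := by
        have h1 : c' * (that - s) ≤ H that - H s := by
          rw [← hint_split s]; exact hsA
        have : E that - E s = (H that - H s) + δ * (that - s) := by
          rw [hE]; ring
        rw [this]
        nlinarith
      -- from F2 : ρ s xhat ≥ ρ that xhat * exp (E that - E s)
      have hF2s : m' ≤ ρ s xhat * Real.exp (E s) :=
        (hF2 s ⟨hsIoo.1.le, hst⟩ xhat hxhatQ).le
      have hexp : ρ that xhat * Real.exp (E that - E s) ≤ ρ s xhat := by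
        have h1 : ρ that xhat * Real.exp (E that) ≤ ρ s xhat * Real.exp (E s) := by
          have hw3 : ρ that xhat * Real.exp (E that) = m' := hF3
          linarith [hF2s]
        have h2 : Real.exp (E that - E s) = Real.exp (E that) / Real.exp (E s) :=
          Real.exp_sub _ _
        rw [h2, ← mul_div_assoc, div_le_iff₀ (Real.exp_pos _)]
        linarith [h1]
      have hge : ρ that xhat * (c' + δ) * (that - s) ≤ ρ s xhat - ρ that xhat := by
        have h1 : (E that - E s) + 1 ≤ Real.exp (E that - E s) :=
          Real.add_one_le_exp _
        nlinarith [hρpos]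
      rw [slope_def_field]
      rw [div_le_iff_of_neg (by linarith : s - that < 0)]
      nlinarith
    nlinarith [hρpos, mul_lt_mul_of_pos_left hc'gt hρpos, mul_pos hρpos hδ]
  -- conclude
  intro t ht x
  obtain ⟨y, hy, k, hyk⟩ := cube_reduce x
  have hper : ρ t x = ρ t y := by
    rw [hyk]; exact hρ_per t ⟨le_trans hσ.le ht.1, ht.2⟩ y k
  have hkey := key (t, y) ⟨ht, hy⟩
  have : m' < ρ t y * Real.exp (E t) := hkey
  rw [hper]
  have h3 := mul_le_mul_of_nonneg_right this.le (Real.exp_nonneg (-(E t)))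
  have h4 : (ρ t y * Real.exp (E t)) * Real.exp (-(E t)) = ρ t y := by
    rw [mul_assoc, ← Real.exp_add]
    simp
  show m' * Real.exp (-(E t)) ≤ ρ t y
  rw [← h4]
  exact h3

set_option maxHeartbeats 1000000 in
lemma barrier_max
    (T ε σ δ M' : ℝ) (hT : 0 < T) (hε : 0 < ε) (hσ : 0 < σ) (hσT : σ ≤ T)
    (hδ : 0 < δ) (hM' : 0 < M')
    (u : ℝ → (Fin 3 → ℝ) → Fin 3 → ℝ) (ρ : ℝ → (Fin 3 → ℝ) → ℝ) (g : ℝ → ℝ)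
    (hu_x : ∀ t ∈ Set.Icc (0 : ℝ) T, ContDiff ℝ 1 (u t))
    (hρ_cont : ContinuousOn (fun p : ℝ × (Fin 3 → ℝ) => ρ p.1 p.2)
      (Set.Icc 0 T ×ˢ Set.univ))
    (hρ_x : ∀ t ∈ Set.Icc (0 : ℝ) T, ContDiff ℝ 2 (ρ t))
    (hρ_per : ∀ t ∈ Set.Icc (0 : ℝ) T, ∀ (x : Fin 3 → ℝ) (k : Fin 3 → ℤ),
      ρ t (x + fun i => (k i : ℝ)) = ρ t x)
    (hpde : ∀ t ∈ Set.Ioc (0 : ℝ) T, ∀ x : Fin 3 → ℝ,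
      HasDerivAt (fun s => ρ s x)
        (ε * (∑ i, pd i (fun y => pd i (ρ t) y) x)
          - ∑ i, pd i (fun y => ρ t y * u t y i) x) t)
    (hg : ∀ t ∈ Set.Icc (0 : ℝ) T,
      IsLUB (Set.range fun x : Fin 3 → ℝ => |∑ i, pd i (fun y => u t y i) x|) (g t))
    (h' : ℝ → ℝ) (hh'int : Integrable h' volume)
    (hP3 : ∀ t ∈ Set.Ioc σ T, ∃ c' : ℝ, g t < c' ∧ ∀ᶠ s in nhdsWithin t (Set.Iio t),
        c' * (t - s) ≤ ∫ τ in s..t, h' τ)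
    (hinit : ∀ x ∈ Set.Icc (0 : Fin 3 → ℝ) 1, ρ σ x < M') :
    ∀ t ∈ Set.Icc σ T, ∀ x : Fin 3 → ℝ,
      ρ t x ≤ M' * Real.exp ((∫ τ in σ..t, h' τ) + δ * (t - σ)) := by
  classical
  set H : ℝ → ℝ := fun s => ∫ τ in σ..s, h' τ with hH
  have hHcont : Continuous H := hh'int.continuous_primitive σ
  set E : ℝ → ℝ := fun s => H s + δ * (s - σ) with hE
  have hEcont : Continuous E := by fun_prop
  have hEσ : E σ = 0 := by
    simp [hE, hH, intervalIntegral.integral_same]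
  set w : ℝ × (Fin 3 → ℝ) → ℝ := fun p => ρ p.1 p.2 * Real.exp (-E p.1) with hw
  set Q : Set (Fin 3 → ℝ) := Set.Icc 0 1 with hQ
  set K : Set (ℝ × (Fin 3 → ℝ)) := Set.Icc σ T ×ˢ Q with hK
  have hKsub : K ⊆ Set.Icc 0 T ×ˢ Set.univ := by
    rintro ⟨t, x⟩ ⟨ht, -⟩
    exact ⟨⟨le_trans hσ.le ht.1, ht.2⟩, trivial⟩
  have hKcomp : IsCompact K := isCompact_Icc.prod isCompact_Icc
  have hKclosed : IsClosed K := isClosed_Icc.prod isClosed_Icc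
  have hwcont : ContinuousOn w K :=
    (hρ_cont.mono hKsub).mul (((hEcont.neg).comp continuous_fst).rexp).continuousOn
  have hρtcont : ∀ y : Fin 3 → ℝ, ContinuousOn (fun s => ρ s y) (Set.Icc 0 T) := by
    intro y
    have : ContinuousOn (fun s : ℝ => ((s, y) : ℝ × (Fin 3 → ℝ))) (Set.Icc 0 T) :=
      (continuous_id.prodMk continuous_const).continuousOn
    exact hρ_cont.comp this (fun s hs => ⟨hs, trivial⟩)
  have hwtcont : ∀ y : Fin 3 → ℝ,
      ContinuousOn (fun s => ρ s y * Real.exp (-E s)) (Set.Icc 0 T) :=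
    fun y => (hρtcont y).mul ((hEcont.neg).rexp).continuousOn
  have key : ∀ p ∈ K, w p < M' := by
    by_contra hcon
    push_neg at hcon
    obtain ⟨p0, hp0K, hp0⟩ := hcon
    set C : Set (ℝ × (Fin 3 → ℝ)) := K ∩ w ⁻¹' Set.Ici M' with hC
    have hCne : C.Nonempty := ⟨p0, hp0K, hp0⟩
    have hCclosed : IsClosed C :=
      hwcont.preimage_isClosed_of_isClosed hKclosed (isClosed_Ici (a := M'))
    have hCcomp : IsCompact C := hKcomp.of_isClosed_subset hCclosed Set.inter_subset_left
    obtain ⟨phat, hphatC, hmin⟩ := hCcomp.exists_isMinOn hCne continuous_fst.continuousOn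
    obtain ⟨that, xhat⟩ := phat
    have hthatK : that ∈ Set.Icc σ T := hphatC.1.1
    have hxhatQ : xhat ∈ Q := hphatC.1.2
    have hwhat : M' ≤ w (that, xhat) := hphatC.2
    have hσthat : σ < that := by
      rcases lt_or_eq_of_le hthatK.1 with h | h
      · exact h
      · exfalso
        have : w (that, xhat) = ρ σ xhat := by
          rw [hw]; simp only; rw [← h, hEσ, neg_zero, Real.exp_zero, mul_one]
        rw [this] at hwhat
        exact absurd hwhat (not_le.mpr (hinit xhat hxhatQ))
    have hthatT : that ≤ T := hthatK.2
    have hthat0T : that ∈ Set.Icc (0:ℝ) T := ⟨le_trans hσ.le hthatK.1, hthatT⟩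
    have hF2 : ∀ s ∈ Set.Ico σ that, ∀ y ∈ Q, w (s, y) < M' := by
      intro s hs y hy
      by_contra hle
      push_neg at hle
      have : (s, y) ∈ C := ⟨⟨⟨hs.1, le_trans hs.2.le hthatT⟩, hy⟩, hle⟩
      exact absurd (hmin this) (not_le.mpr hs.2)
    have hsub1 : Set.Ioo σ that ⊆ Set.Icc (0:ℝ) T := fun s hs =>
      ⟨le_trans hσ.le hs.1.le, le_trans hs.2.le hthatT⟩
    have hneBot : (nhdsWithin that (Set.Ioo σ that)).NeBot := by
      rw [← mem_closure_iff_nhdsWithin_neBot, closure_Ioo hσthat.ne]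
      exact ⟨hσthat.le, le_refl that⟩
    have hF3 : w (that, xhat) = M' := by
      refine le_antisymm ?_ hwhat
      have h9 : ρ that xhat * Real.exp (-E that) ≤ M' := by
        have hlim : Filter.Tendsto (fun s => ρ s xhat * Real.exp (-E s))
            (nhdsWithin that (Set.Ioo σ that)) (nhds (ρ that xhat * Real.exp (-E that))) :=
          ((hwtcont xhat that hthat0T).mono hsub1).tendsto
        refine le_of_tendsto hlim ?_
        filter_upwards [self_mem_nhdsWithin] with s hs
        exact (hF2 s ⟨hs.1.le, hs.2⟩ xhat hxhatQ).le
      exact h9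
    have hρeq : ρ that xhat = M' * Real.exp (E that) := by
      have h1 : ρ that xhat * Real.exp (-E that) = M' := hF3
      have h3 : Real.exp (-E that) * Real.exp (E that) = 1 := by
        rw [← Real.exp_add]; simp
      calc ρ that xhat = ρ that xhat * (Real.exp (-E that) * Real.exp (E that)) := by
            rw [h3, mul_one]
      _ = (ρ that xhat * Real.exp (-E that)) * Real.exp (E that) := by ring
      _ = M' * Real.exp (E that) := by rw [h1]
    have hρpos : 0 < ρ that xhat := by
      rw [hρeq]; positivity
    have hF4 : ∀ y, ρ that y ≤ ρ that xhat := by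
      have hQmax : ∀ y ∈ Q, ρ that y ≤ ρ that xhat := by
        intro y hy
        by_contra hlt
        push_neg at hlt
        have hwy : M' < ρ that y * Real.exp (-E that) := by
          have := mul_lt_mul_of_pos_right hlt (Real.exp_pos (-E that))
          calc M' = ρ that xhat * Real.exp (-E that) := hF3.symm
          _ < ρ that y * Real.exp (-E that) := this
        have hlim : Filter.Tendsto (fun s => ρ s y * Real.exp (-E s))
            (nhdsWithin that (Set.Ioo σ that)) (nhds (ρ that y * Real.exp (-E that))) :=
          ((hwtcont y that hthat0T).mono hsub1).tendsto
        have hev := hlim.eventually_const_lt hwy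
        obtain ⟨s, hs1, hs2⟩ := (hev.and self_mem_nhdsWithin).exists
        exact absurd hs1 (not_lt.mpr (hF2 s ⟨hs2.1.le, hs2.2⟩ y hy).le)
      intro y
      obtain ⟨z, hz, k, hzk⟩ := cube_reduce y
      have : ρ that y = ρ that z := by rw [hzk]; exact hρ_per that hthat0T z k
      rw [this]
      exact hQmax z hz
    have hmemIoc : that ∈ Set.Ioc (0:ℝ) T := ⟨lt_of_le_of_lt hσ.le hσthat, hthatT⟩
    have hD := hpde that hmemIoc xhat
    set D : ℝ := ε * (∑ i, pd i (fun y => pd i (ρ that) y) xhat)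
      - ∑ i, pd i (fun y => ρ that y * u that y i) xhat with hDdef
    have hdivb : |∑ i, pd i (fun y => u that y i) xhat| ≤ g that :=
      (hg that hthat0T).1 (Set.mem_range_self xhat)
    have hup : D ≤ ρ that xhat * g that :=
      rhs_le_at_max ε (g that) hε (ρ that) (u that) (hρ_x that hthat0T)
        (hu_x that hthat0T) xhat hF4 hρpos hdivb
    obtain ⟨c', hc'gt, hc'ev⟩ := hP3 that ⟨hσthat, hthatT⟩
    have hg0 : 0 ≤ g that := le_trans (abs_nonneg _) hdivb
    have hcδ : 0 < c' + δ := by linarith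
    have hslope : Filter.Tendsto (slope (fun s => ρ s xhat) that)
        (nhdsWithin that (Set.Iio that)) (nhds D) := by
      have h1 := (hD.hasDerivWithinAt (s := Set.Iio that))
      exact (hasDerivWithinAt_iff_tendsto_slope' (x := that) (s := Set.Iio that)
        (by simp)).mp h1
    have hint_split : ∀ s, (∫ τ in s..that, h' τ) = H that - H s := by
      intro s
      have := intervalIntegral.integral_add_adjacent_intervals
        (hh'int.intervalIntegrable (a := σ) (b := s))
        (hh'int.intervalIntegrable (a := s) (b := that))
      have h9 : H s + (∫ τ in s..that, h' τ) = H that := this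
      linarith
    have hIoo : Set.Ioo σ that ∈ nhdsWithin that (Set.Iio that) :=
      Ioo_mem_nhdsLT_of_mem ⟨hσthat, le_refl that⟩
    have hEtend : Filter.Tendsto E (nhdsWithin that (Set.Iio that)) (nhds (E that)) :=
      (hEcont.tendsto that).mono_left nhdsWithin_le_nhds
    -- D is at least ρ(c'+δ)exp(-η) for every η > 0
    have hDge : ∀ η : ℝ, 0 < η → ρ that xhat * (c' + δ) * Real.exp (-η) ≤ D := by
      intro η hη
      have hEev : ∀ᶠ s in nhdsWithin that (Set.Iio that), |E s - E that| < η := by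
        have := Metric.tendsto_nhds.mp hEtend η hη
        filter_upwards [this] with s hs
        rwa [Real.dist_eq] at hs
      refine ge_of_tendsto hslope ?_
      filter_upwards [hc'ev, hIoo, hEev] with s hsA hsIoo hsE
      have hst : s < that := hsIoo.2
      set A : ℝ := E that - E s with hA
      have hA1 : (c' + δ) * (that - s) ≤ A := by
        have h1 : c' * (that - s) ≤ H that - H s := by
          rw [← hint_split s]; exact hsA
        have h2 : A = (H that - H s) + δ * (that - s) := by rw [hA, hE]; ring
        rw [h2]; nlinarith
      have hA0 : 0 ≤ A := le_trans (by nlinarith) hA1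
      have hAη : A ≤ η := by
        have := abs_lt.mp hsE
        rw [hA]; linarith [this.1]
      have hee : Real.exp (-η) ≤ Real.exp (-A) := Real.exp_le_exp.mpr (by linarith)
      -- upper bound for ρ s xhat
      have hF2s : ρ s xhat * Real.exp (-E s) ≤ M' :=
        (hF2 s ⟨hsIoo.1.le, hst⟩ xhat hxhatQ).le
      have hfs : ρ s xhat ≤ ρ that xhat * Real.exp (-A) := by
        have h1 : ρ s xhat * Real.exp (-E s) ≤ ρ that xhat * Real.exp (-E that) := by
          have hw3 : ρ that xhat * Real.exp (-E that) = M' := hF3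
          linarith
        have h2 : Real.exp (-A) = Real.exp (-E that) / Real.exp (-E s) := by
          rw [← Real.exp_sub]; congr 1; rw [hA]; ring
        rw [h2, ← mul_div_assoc, le_div_iff₀ (Real.exp_pos _)]
        linarith
      have h2 : Real.exp (-A) * (1 + A) ≤ 1 := by
        rw [Real.exp_neg, inv_mul_le_iff₀ (Real.exp_pos _)]
        have := Real.add_one_le_exp A
        linarith
      have h2' : Real.exp (-A) + A * Real.exp (-A) ≤ 1 := by nlinarith [h2]
      have h7 : ρ that xhat * (Real.exp (-A) + A * Real.exp (-A)) ≤ ρ that xhat * 1 :=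
        mul_le_mul_of_nonneg_left h2' hρpos.le
      have h8 : ρ that xhat * Real.exp (-A) + ρ that xhat * (A * Real.exp (-A))
          ≤ ρ that xhat := by nlinarith [h7]
      have hstep : ρ s xhat - ρ that xhat ≤ -(ρ that xhat * (A * Real.exp (-A))) := by
        linarith [hfs, h8]
      have hstep2 : (c' + δ) * Real.exp (-η) * (that - s) ≤ A * Real.exp (-A) := by
        have := mul_le_mul hA1 hee (Real.exp_pos (-η)).le hA0
        calc (c' + δ) * Real.exp (-η) * (that - s)
            = ((c' + δ) * (that - s)) * Real.exp (-η) := by ring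
        _ ≤ A * Real.exp (-A) := this
      have hstep3 : ρ that xhat * ((c' + δ) * Real.exp (-η) * (that - s))
          ≤ ρ that xhat * (A * Real.exp (-A)) := mul_le_mul_of_nonneg_left hstep2 hρpos.le
      rw [slope_def_field, le_div_iff_of_neg (by linarith : s - that < 0)]
      have hring : ρ that xhat * (c' + δ) * Real.exp (-η) * (s - that)
          = -(ρ that xhat * ((c' + δ) * Real.exp (-η) * (that - s))) := by ring
      rw [hring]
      linarith [hstep, hstep3]
    have hDge' : ρ that xhat * (c' + δ) ≤ D := by
      have htend : Filter.Tendsto (fun η : ℝ => ρ that xhat * (c' + δ) * Real.exp (-η))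
          (nhdsWithin 0 (Set.Ioi 0)) (nhds (ρ that xhat * (c' + δ))) := by
        have hc : Continuous (fun η : ℝ => ρ that xhat * (c' + δ) * Real.exp (-η)) := by
          fun_prop
        have := (hc.tendsto 0).mono_left (nhdsWithin_le_nhds (s := Set.Ioi (0:ℝ)))
        simpa using this
      refine le_of_tendsto htend ?_
      filter_upwards [self_mem_nhdsWithin] with η hη
      exact hDge η hη
    have hc1 : ρ that xhat * g that < ρ that xhat * c' :=
      mul_lt_mul_of_pos_left hc'gt hρpos
    have hc2 : ρ that xhat * (c' + δ) = ρ that xhat * c' + ρ that xhat * δ := by ring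
    have hc3 : 0 < ρ that xhat * δ := mul_pos hρpos hδ
    linarith [hup, hDge']
  -- conclude
  intro t ht x
  obtain ⟨y, hy, k, hyk⟩ := cube_reduce x
  have hper : ρ t x = ρ t y := by
    rw [hyk]; exact hρ_per t ⟨le_trans hσ.le ht.1, ht.2⟩ y k
  have hkey := key (t, y) ⟨ht, hy⟩
  have h1 : ρ t y * Real.exp (-E t) < M' := hkey
  rw [hper]
  have h3 := mul_le_mul_of_nonneg_right h1.le (Real.exp_nonneg (E t))
  have h4 : (ρ t y * Real.exp (-(E t))) * Real.exp (E t) = ρ t y := by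
    rw [mul_assoc, ← Real.exp_add]
    simp
  show ρ t y ≤ M' * Real.exp (E t)
  rw [← h4]
  exact h3

set_option maxHeartbeats 1000000 in
/-- Maximum-principle bound of Lemma 2.1 for the regularized continuity equation
`∂_t ρ + div(ρ u) = ε Δρ` on the torus: for `0 ≤ t ≤ T`,
`m₀ exp(−∫₀ᵗ g) ≤ ρ(t,x) ≤ M₀ exp(∫₀ᵗ g)`, where `g(t) = sup_x |div u(t,x)|`. -/
theorem regularized_continuity_maximum_principle
    (T ε : ℝ) (hT : 0 < T) (hε : 0 < ε)
    (u : ℝ → (Fin 3 → ℝ) → Fin 3 → ℝ) (ρ : ℝ → (Fin 3 → ℝ) → ℝ)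
    (g : ℝ → ℝ) (m0 M0 : ℝ)
    (hu_cont : ContinuousOn (fun p : ℝ × (Fin 3 → ℝ) => u p.1 p.2)
      (Set.Icc 0 T ×ˢ Set.univ))
    (hu_x : ∀ t ∈ Set.Icc (0 : ℝ) T, ContDiff ℝ 1 (u t))
    (hu_per : ∀ t ∈ Set.Icc (0 : ℝ) T, ∀ (x : Fin 3 → ℝ) (k : Fin 3 → ℤ),
      u t (x + fun i => (k i : ℝ)) = u t x)
    (hρ_cont : ContinuousOn (fun p : ℝ × (Fin 3 → ℝ) => ρ p.1 p.2)
      (Set.Icc 0 T ×ˢ Set.univ))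
    (hρ_x : ∀ t ∈ Set.Icc (0 : ℝ) T, ContDiff ℝ 2 (ρ t))
    (hρ_per : ∀ t ∈ Set.Icc (0 : ℝ) T, ∀ (x : Fin 3 → ℝ) (k : Fin 3 → ℤ),
      ρ t (x + fun i => (k i : ℝ)) = ρ t x)
    (hpde : ∀ t ∈ Set.Ioc (0 : ℝ) T, ∀ x : Fin 3 → ℝ,
      HasDerivAt (fun s => ρ s x)
        (ε * (∑ i, pd i (fun y => pd i (ρ t) y) x)
          - ∑ i, pd i (fun y => ρ t y * u t y i) x) t)
    (hm0 : 0 < m0) (hlow : ∀ x, m0 ≤ ρ 0 x) (hhigh : ∀ x, ρ 0 x ≤ M0)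
    (hg : ∀ t ∈ Set.Icc (0 : ℝ) T,
      IsLUB (Set.range fun x : Fin 3 → ℝ => |∑ i, pd i (fun y => u t y i) x|) (g t))
    (hgint : IntervalIntegrable g volume 0 T) :
    ∀ t ∈ Set.Icc (0 : ℝ) T, ∀ x : Fin 3 → ℝ,
      m0 * Real.exp (-(∫ s in (0 : ℝ)..t, g s)) ≤ ρ t x ∧
      ρ t x ≤ M0 * Real.exp (∫ s in (0 : ℝ)..t, g s) := by
  classical
  have hM0 : 0 < M0 := lt_of_lt_of_le hm0 (le_trans (hlow 0) (hhigh 0))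
  intro t ht x
  rcases eq_or_lt_of_le ht.1 with h0 | htpos
  · -- t = 0
    rw [← h0]
    simp only [intervalIntegral.integral_same, neg_zero, Real.exp_zero, mul_one]
    exact ⟨hlow x, hhigh x⟩
  set L : ℝ := ∫ s in (0:ℝ)..t, g s with hL
  set Q : Set (Fin 3 → ℝ) := Set.Icc 0 1 with hQ
  -- nonnegativity of g
  have hgnn : ∀ s ∈ Set.Icc (0:ℝ) T, 0 ≤ g s := fun s hs =>
    le_trans (abs_nonneg _) ((hg s hs).1 (Set.mem_range_self 0))
  -- uniform continuity on the compact time-space box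
  have hKcomp : IsCompact (Set.Icc (0:ℝ) T ×ˢ Q) := isCompact_Icc.prod isCompact_Icc
  have hρK : ContinuousOn (fun p : ℝ × (Fin 3 → ℝ) => ρ p.1 p.2) (Set.Icc (0:ℝ) T ×ˢ Q) :=
    hρ_cont.mono (fun p hp => ⟨hp.1, trivial⟩)
  have hucont := hKcomp.uniformContinuousOn_of_continuous hρK
  -- the primitive of g is continuous at 0 within [0, T]
  have hgIcc : IntegrableOn g (Set.Icc 0 T) volume := by
    rw [integrableOn_Icc_iff_integrableOn_Ioc]
    exact hgint.1
  have hprim : ContinuousOn (fun r => ∫ s in (0:ℝ)..r, g s) (Set.Icc 0 T) := by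
    have := intervalIntegral.continuousOn_primitive_interval
      (a := 0) (b := T) (μ := volume) (f := g) (by rwa [Set.uIcc_of_le hT.le])
    rwa [Set.uIcc_of_le hT.le] at this
  -- key inequality for every small positive e
  have main_e : ∀ e : ℝ, 0 < e → e < m0 / 2 →
      (m0 - 2*e) * Real.exp (-(L + 2*e)) ≤ ρ t x ∧
      ρ t x ≤ (M0 + 2*e) * Real.exp (L + 2*e) := by
    intro e he hem
    -- choose d from uniform continuity
    obtain ⟨d, hd, hdprop⟩ := Metric.uniformContinuousOn_iff.mp hucont e he
    -- choose r0 from continuity of the primitive at 0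
    have hconat0 : ContinuousWithinAt (fun r => ∫ s in (0:ℝ)..r, g s)
        (Set.Icc 0 T) 0 := hprim 0 ⟨le_refl 0, hT.le⟩
    have hev : ∀ᶠ r in nhdsWithin 0 (Set.Icc 0 T), |∫ s in (0:ℝ)..r, g s| < e := by
      have h1 : Filter.Tendsto (fun r => ∫ s in (0:ℝ)..r, g s)
          (nhdsWithin 0 (Set.Icc 0 T)) (nhds 0) := by
        have := hconat0.tendsto
        simpa [intervalIntegral.integral_same] using this
      have := Metric.tendsto_nhds.mp h1 e he
      filter_upwards [this] with r hr
      rwa [Real.dist_eq, sub_zero] at hr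
    obtain ⟨U, hU, hUsub⟩ := (eventually_nhdsWithin_iff).mp hev |>.exists_mem
    obtain ⟨r0, hr0, hball⟩ := Metric.mem_nhds_iff.mp hU
    set σ : ℝ := min (t/2) (min (d/2) (r0/2)) with hσdef
    have hσpos : 0 < σ := lt_min (half_pos htpos) (lt_min (half_pos hd) (half_pos hr0))
    have hσt : σ < t := lt_of_le_of_lt (min_le_left _ _) (by linarith [htpos])
    have hσd : σ < d := lt_of_le_of_lt (le_trans (min_le_right _ _) (min_le_left _ _))
      (by linarith [hd])
    have hσr0 : σ < r0 := lt_of_le_of_lt (le_trans (min_le_right _ _) (min_le_right _ _))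
      (by linarith [hr0])
    have hσT : σ ≤ T := le_trans hσt.le ht.2
    have hσ0T : σ ∈ Set.Icc (0:ℝ) T := ⟨hσpos.le, hσT⟩
    -- (a) closeness of ρ σ to ρ 0 on Q
    have ha : ∀ y ∈ Q, |ρ σ y - ρ 0 y| < e := by
      intro y hy
      have h1 : ((σ, y) : ℝ × (Fin 3 → ℝ)) ∈ Set.Icc (0:ℝ) T ×ˢ Q := ⟨hσ0T, hy⟩
      have h2 : ((0, y) : ℝ × (Fin 3 → ℝ)) ∈ Set.Icc (0:ℝ) T ×ˢ Q :=
        ⟨⟨le_refl 0, hT.le⟩, hy⟩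
      have hdist : dist ((σ, y) : ℝ × (Fin 3 → ℝ)) ((0, y) : ℝ × (Fin 3 → ℝ)) < d := by
        rw [Prod.dist_eq]
        simp only [dist_self]
        rw [max_eq_left dist_nonneg, Real.dist_eq, sub_zero, abs_of_pos hσpos]
        exact hσd
      have := hdprop _ h1 _ h2 hdist
      rwa [Real.dist_eq] at this
    -- (b) small initial integral
    have hb : |∫ s in (0:ℝ)..σ, g s| < e := by
      apply hUsub
      · apply hball
        rw [Metric.mem_ball, Real.dist_eq, sub_zero, abs_of_pos hσpos]
        exact hσr0
      · exact hσ0T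
    have hinitlow : ∀ y ∈ Set.Icc (0 : Fin 3 → ℝ) 1, m0 - 2*e < ρ σ y := by
      intro y hy
      have h1 := abs_lt.mp (ha y hy)
      have h2 := hlow y
      linarith [h1.1]
    have hinithigh : ∀ y ∈ Set.Icc (0 : Fin 3 → ℝ) 1, ρ σ y < M0 + 2*e := by
      intro y hy
      have h1 := abs_lt.mp (ha y hy)
      have h2 := hhigh y
      linarith [h1.2]
    obtain ⟨h', hh'int, hP3, hmaj⟩ := exists_majorant g σ T hσpos hσT hgint
      (fun s hs => hgnn s ⟨le_trans hσpos.le hs.1, hs.2⟩) he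
    have htIcc : t ∈ Set.Icc σ T := ⟨hσt.le, ht.2⟩
    set Iσt : ℝ := ∫ τ in σ..t, h' τ with hIdef
    have hgsub : ∀ a b : ℝ, 0 ≤ a → a ≤ b → b ≤ T → IntervalIntegrable g volume a b := by
      intro a b hA hab hbT
      apply hgint.mono_set
      rw [Set.uIcc_of_le hab, Set.uIcc_of_le hT.le]
      exact Set.Icc_subset_Icc hA hbT
    have hsplit : (∫ s in (0:ℝ)..σ, g s) + (∫ s in σ..t, g s) = L :=
      intervalIntegral.integral_add_adjacent_intervals
        (hgsub 0 σ le_rfl hσpos.le hσT) (hgsub σ t hσpos.le hσt.le ht.2)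
    have hIle : Iσt ≤ L + 2*e := by
      have h1 := hmaj t htIcc
      have h2 := abs_lt.mp hb
      have h3 : (∫ s in σ..t, g s) ≤ L + e := by linarith [h2.1]
      calc Iσt ≤ (∫ τ in σ..t, g τ) + e := h1
      _ ≤ L + 2*e := by linarith
    have hm2e : (0:ℝ) < m0 - 2*e := by linarith
    have hM2e : (0:ℝ) < M0 + 2*e := by linarith
    constructor
    · -- lower bound
      have hbar : ∀ δ : ℝ, 0 < δ →
          (m0 - 2*e) * Real.exp (-(Iσt + δ * (t - σ))) ≤ ρ t x := by
        intro δ hδ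
        exact barrier_min T ε σ δ (m0 - 2*e) hT hε hσpos hσT hδ hm2e u ρ g hu_x
          hρ_cont hρ_x hρ_per hpde hg h' hh'int hP3 hinitlow t htIcc x
      have hlim : Filter.Tendsto (fun δ : ℝ => (m0 - 2*e) * Real.exp (-(Iσt + δ * (t - σ))))
          (nhdsWithin 0 (Set.Ioi 0)) (nhds ((m0 - 2*e) * Real.exp (-Iσt))) := by
        have hc : Continuous (fun δ : ℝ => (m0 - 2*e) * Real.exp (-(Iσt + δ * (t - σ)))) := by
          fun_prop
        have := (hc.tendsto 0).mono_left (nhdsWithin_le_nhds (s := Set.Ioi (0:ℝ)))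
        simpa using this
      have h3 : (m0 - 2*e) * Real.exp (-Iσt) ≤ ρ t x := by
        refine le_of_tendsto hlim ?_
        filter_upwards [self_mem_nhdsWithin] with δ hδ
        exact hbar δ hδ
      calc (m0 - 2*e) * Real.exp (-(L + 2*e))
          ≤ (m0 - 2*e) * Real.exp (-Iσt) :=
            mul_le_mul_of_nonneg_left (Real.exp_le_exp.mpr (by linarith)) hm2e.le
      _ ≤ ρ t x := h3
    · -- upper bound
      have hbar : ∀ δ : ℝ, 0 < δ →
          ρ t x ≤ (M0 + 2*e) * Real.exp (Iσt + δ * (t - σ)) := by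
        intro δ hδ
        exact barrier_max T ε σ δ (M0 + 2*e) hT hε hσpos hσT hδ hM2e u ρ g hu_x
          hρ_cont hρ_x hρ_per hpde hg h' hh'int hP3 hinithigh t htIcc x
      have hlim : Filter.Tendsto (fun δ : ℝ => (M0 + 2*e) * Real.exp (Iσt + δ * (t - σ)))
          (nhdsWithin 0 (Set.Ioi 0)) (nhds ((M0 + 2*e) * Real.exp Iσt)) := by
        have hc : Continuous (fun δ : ℝ => (M0 + 2*e) * Real.exp (Iσt + δ * (t - σ))) := by
          fun_prop
        have := (hc.tendsto 0).mono_left (nhdsWithin_le_nhds (s := Set.Ioi (0:ℝ)))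
        simpa using this
      have h3 : ρ t x ≤ (M0 + 2*e) * Real.exp Iσt := by
        refine ge_of_tendsto hlim ?_
        filter_upwards [self_mem_nhdsWithin] with δ hδ
        exact hbar δ hδ
      calc ρ t x ≤ (M0 + 2*e) * Real.exp Iσt := h3
      _ ≤ (M0 + 2*e) * Real.exp (L + 2*e) :=
            mul_le_mul_of_nonneg_left (Real.exp_le_exp.mpr hIle) hM2e.le
  -- pass to the limit e → 0⁺
  constructor
  · have htend : Filter.Tendsto (fun e : ℝ => (m0 - 2*e) * Real.exp (-(L + 2*e)))
        (nhdsWithin 0 (Set.Ioi 0)) (nhds (m0 * Real.exp (-L))) := by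
      have hc : Continuous (fun e : ℝ => (m0 - 2*e) * Real.exp (-(L + 2*e))) := by
        fun_prop
      have := (hc.tendsto 0).mono_left (nhdsWithin_le_nhds (s := Set.Ioi (0:ℝ)))
      simpa using this
    refine le_of_tendsto htend ?_
    filter_upwards [Ioo_mem_nhdsGT_of_mem
      (Set.mem_Ico.mpr ⟨le_refl 0, half_pos hm0⟩)] with e he
    exact (main_e e he.1 he.2).1
  · have htend : Filter.Tendsto (fun e : ℝ => (M0 + 2*e) * Real.exp (L + 2*e))
        (nhdsWithin 0 (Set.Ioi 0)) (nhds (M0 * Real.exp L)) := by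
      have hc : Continuous (fun e : ℝ => (M0 + 2*e) * Real.exp (L + 2*e)) := by
        fun_prop
      have := (hc.tendsto 0).mono_left (nhdsWithin_le_nhds (s := Set.Ioi (0:ℝ)))
      simpa using this
    refine ge_of_tendsto htend ?_
    filter_upwards [Ioo_mem_nhdsGT_of_mem
      (Set.mem_Ico.mpr ⟨le_refl 0, half_pos hm0⟩)] with e he
    exact (main_e e he.1 he.2).2
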